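/- For α = 1/2 and the power-fractional offspring generating function f(s) = 1 - [(1-s)^{-1/2} + 1]^{-2}, the infinite product φ(s) = ∏_{n=0}^∞ f_n(s), where f_n is the n-fold composition of f, equals 1 - √(1-s) for all s ∈ [0,1]. -/

import Mathlib

open Filter Set Topology

/-- for `α = 1/2` and the power-fractional offspring generating function
`f(s) = 1 - ((1-s)^{-1/2} + 1)^{-2}`, the infinite product `φ(s) = ∏_{n=0}^∞ f_n(s)`
of the iterates of `f` equals `1 - √(1-s)` for all `s ∈ [0,1]`. -/
theorem power_fractional_stationary_product (f : ℝ → ℝ)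
    (hf : ∀ s ∈ Set.Ico (0 : ℝ) 1,
      f s = 1 - ((1 - s) ^ (-(1/2 : ℝ)) + 1) ^ (-(2 : ℝ)))
    (hf1 : f 1 = 1) :
    ∀ s ∈ Set.Icc (0 : ℝ) 1, (∏' n : ℕ, f^[n] s) = 1 - Real.sqrt (1 - s) := by
  intro s hs
  rcases eq_or_lt_of_le hs.2 with h1 | hlt1
  · -- s = 1
    have : (fun n : ℕ => f^[n] s) = fun _ => (1 : ℝ) := by
      funext n
      rw [h1, Function.iterate_fixed hf1]
    rw [this, tprod_one, h1]
    simp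
  rcases eq_or_lt_of_le hs.1 with h0 | hlt0
  · -- s = 0
    have hzero : f^[0] s = 0 := by simp [← h0]
    have hp : HasProd (fun n : ℕ => f^[n] s) 0 := by
      have hev : ∀ᶠ F in (atTop : Filter (Finset ℕ)), ∏ i ∈ F, f^[i] s = 0 := by
        filter_upwards [Filter.eventually_ge_atTop ({0} : Finset ℕ)] with F hF
        exact Finset.prod_eq_zero (Finset.singleton_subset_iff.mp hF) hzero
      exact tendsto_const_nhds.congr' (hev.mono fun F h => h.symm)
    rw [hp.tprod_eq, ← h0]
    simp
  · -- 0 < s < 1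
    set t := Real.sqrt (1 - s) with htdef
    have ht2 : t ^ 2 = 1 - s := Real.sq_sqrt (by linarith)
    have ht0 : 0 < t := Real.sqrt_pos.mpr (by linarith)
    have ht1 : t < 1 := by nlinarith
    -- iterate formula
    have hit : ∀ n : ℕ, f^[n] s = 1 - t ^ 2 / (1 + n * t) ^ 2 := by
      intro n
      induction n with
      | zero => simp; linarith
      | succ n ih =>
        have hc : (0 : ℝ) < 1 + n * t := by positivity
        have hc' : (0 : ℝ) < 1 + (n + 1 : ℕ) * t := by positivity
        have htc : t < 1 + n * t := by nlinarith [mul_nonneg (Nat.cast_nonneg (α := ℝ) n) ht0.le]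
        have hfrac0 : 0 < t ^ 2 / (1 + n * t) ^ 2 := by positivity
        have hfrac1 : t ^ 2 / (1 + n * t) ^ 2 < 1 := by
          rw [div_lt_one (by positivity)]; nlinarith
        have hmem : f^[n] s ∈ Set.Ico (0 : ℝ) 1 := ⟨by rw [ih]; linarith, by rw [ih]; linarith⟩
        rw [Function.iterate_succ_apply', hf _ hmem, ih]
        have e1 : 1 - (1 - t ^ 2 / (1 + n * t) ^ 2) = (t / (1 + n * t)) ^ 2 := by
          rw [sub_sub_cancel, div_pow]
        have e2 : ((t / (1 + n * t)) ^ 2 : ℝ) ^ (-(1/2 : ℝ)) = (1 + n * t) / t := by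
          rw [← Real.rpow_natCast (t / (1 + n * t)) 2, ← Real.rpow_mul (by positivity)]
          norm_num
          rw [Real.rpow_neg_one, inv_div]
        have e3 : (1 + n * t) / t + 1 = (1 + (n + 1 : ℕ) * t) / t := by
          field_simp
          push_cast
          ring
        have e4 : ((1 + (n + 1 : ℕ) * t) / t : ℝ) ^ (-(2 : ℝ)) = t ^ 2 / (1 + (n + 1 : ℕ) * t) ^ 2 := by
          rw [Real.rpow_neg (by positivity), show ((2:ℝ)) = ((2:ℕ):ℝ) by norm_num,
            Real.rpow_natCast, div_pow, inv_div]
        rw [e1, e2, e3, e4]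
    -- positivity of factors
    have hd : ∀ N : ℕ, (0 : ℝ) < 1 + ((N : ℝ) - 1) * t := by
      intro N
      have : (0:ℝ) ≤ (N:ℝ) := Nat.cast_nonneg N
      nlinarith
    have hgpos : ∀ n : ℕ, (0 : ℝ) < 1 - t ^ 2 / (1 + n * t) ^ 2 := by
      intro n
      have hc : (0 : ℝ) < 1 + n * t := by positivity
      have htc : t < 1 + n * t := by nlinarith [mul_nonneg (Nat.cast_nonneg (α := ℝ) n) ht0.le]
      have : t ^ 2 / (1 + n * t) ^ 2 < 1 := by rw [div_lt_one (by positivity)]; nlinarith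
      linarith
    have hgle : ∀ n : ℕ, 1 - t ^ 2 / (1 + n * t) ^ 2 ≤ 1 := by
      intro n
      have hc : (0 : ℝ) < 1 + n * t := by positivity
      have : 0 ≤ t ^ 2 / (1 + n * t) ^ 2 := by positivity
      linarith
    -- partial products
    have hP : ∀ N : ℕ, ∏ n ∈ Finset.range N, (1 - t ^ 2 / (1 + n * t) ^ 2)
        = (1 - t) * (1 + N * t) / (1 + ((N : ℝ) - 1) * t) := by
      intro N
      induction N with
      | zero =>
        simp only [Finset.range_zero, Finset.prod_empty, Nat.cast_zero, Nat.cast_ofNat,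
          zero_sub, neg_mul, one_mul]
        rw [eq_comm, div_eq_one_iff_eq (by linarith : (1:ℝ) + -t ≠ 0)]
        ring
      | succ N ih =>
        rw [Finset.prod_range_succ, ih]
        have h1 := hd N
        have h2 := hd (N + 1)
        have hc : (0 : ℝ) < 1 + N * t := by positivity
        push_cast at h2 ⊢
        rw [one_sub_div (pow_ne_zero 2 hc.ne'), div_mul_div_comm, div_eq_div_iff (by positivity) h2.ne']
        ring
    -- limit of partial products
    have hinf : Tendsto (fun N : ℕ => 1 + ((N : ℝ) - 1) * t) atTop atTop := by
      apply tendsto_atTop_add_const_left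
      apply Tendsto.atTop_mul_const ht0
      exact tendsto_atTop_add_const_right _ _ tendsto_natCast_atTop_atTop
    have hlim : Tendsto (fun N : ℕ => (1 - t) * (1 + N * t) / (1 + ((N : ℝ) - 1) * t))
        atTop (𝓝 (1 - t)) := by
      have h0' : Tendsto (fun N : ℕ => (1 + ((N : ℝ) - 1) * t)⁻¹) atTop (𝓝 0) :=
        hinf.inv_tendsto_atTop
      have haux : Tendsto (fun N : ℕ => (1 - t) * (1 + t * (1 + ((N : ℝ) - 1) * t)⁻¹))
          atTop (𝓝 ((1 - t) * (1 + t * 0))) :=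
        (tendsto_const_nhds.add (h0'.const_mul t)).const_mul (1 - t)
      simp only [mul_zero, add_zero, mul_one] at haux
      apply haux.congr
      intro N
      have h := hd N
      rw [mul_div_assoc]
      congr 1
      rw [eq_div_iff h.ne']
      have hx : (1 + ((N : ℝ) - 1) * t) ≠ 0 := h.ne'
      rw [add_mul, mul_assoc, inv_mul_cancel₀ hx]
      ring
    -- summability of logs
    have hsum : Summable fun n : ℕ => -Real.log (1 - t ^ 2 / (1 + n * t) ^ 2) := by
      apply summable_of_sum_range_le (c := -Real.log (1 - t)) (fun n => by
        have := Real.log_nonpos (by linarith [hgpos n]) (hgle n); linarith)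
      intro N
      rw [Finset.sum_neg_distrib, ← Real.log_prod (fun n _ => (hgpos n).ne'), hP N]
      have h1 := hd N
      have hc : (0 : ℝ) < 1 + N * t := by positivity
      have hge : (1 - t) ≤ (1 - t) * (1 + N * t) / (1 + ((N : ℝ) - 1) * t) := by
        rw [le_div_iff₀ h1]
        nlinarith
      have := Real.log_le_log (by linarith) hge
      linarith
    have hsum' : Summable fun n : ℕ => Real.log (1 - t ^ 2 / (1 + n * t) ^ 2) := by
      have := hsum.neg
      simpa using this
    have hm : Multipliable fun n : ℕ => 1 - t ^ 2 / (1 + n * t) ^ 2 := by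
      have hp := hsum'.hasSum.rexp
      have heq : (Real.exp ∘ fun n : ℕ => Real.log (1 - t ^ 2 / (1 + n * t) ^ 2))
          = fun n : ℕ => 1 - t ^ 2 / (1 + n * t) ^ 2 :=
        funext fun n => Real.exp_log (hgpos n)
      rw [heq] at hp
      exact ⟨_, hp⟩
    have hkey : (∏' n : ℕ, (1 - t ^ 2 / (1 + n * t) ^ 2)) = 1 - t := by
      have h1 := hm.hasProd.tendsto_prod_nat
      have h2 : Tendsto (fun N : ℕ => ∏ n ∈ Finset.range N, (1 - t ^ 2 / (1 + n * t) ^ 2))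
          atTop (𝓝 (1 - t)) := by
        apply hlim.congr
        intro N
        exact (hP N).symm
      exact tendsto_nhds_unique h1 h2
    rw [tprod_congr hit, hkey]
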